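/- Let the dicyclic group Γ of order 4r (r even) have exponent c_Γ = 2r, and let α be an irreducible representation of Γ. Then Σ_{m=1}^{c_Γ} β_m^α equals r/2 if α is one of the four 1-dimensional representations, r if α = ψ_t with t even, and r+1 if α = ψ_t with t odd, where ψ_t (1 ≤ t ≤ r−1) are the 2-dimensional irreducibles. -/

import Mathlib

open Finset

/-- The characters of the restrictions to a subgroup of `SU(2)` of the irreducible
`SU(2)`-representations `E_k`, defined from the character `tr` of the standard
representation by the Clebsch–Gordan recursion. -/
noncomputable def chiERec {G : Type*} (tr : G → ℂ) : ℕ → G → ℂ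
  | 0, _ => 1
  | 1, g => tr g
  | (k + 2), g => tr g * chiERec tr (k + 1) g - chiERec tr k g

/-- The character of the standard 2-dimensional representation of the dicyclic group
`Dic_r = QuaternionGroup r ⊂ SU(2)`:  `a^i ↦ diag(ζ^i, ζ^{-i})`, `x a^i ↦ antidiagonal`,
with `ζ = e^{πi/r}`; more generally `ψ_t` with `ζ^t` in place of `ζ`. -/
noncomputable def psiT (r : ℕ) (t : ℕ) : QuaternionGroup r → ℂ
  | .a i => Complex.exp (Real.pi * Complex.I * t * i.val / r)
      + Complex.exp (-(Real.pi * Complex.I * t * i.val / r))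
  | .xa _ => 0

/-- The 1-dimensional characters of the dicyclic group `Dic_r` for `r` even, determined
by signs `ε₁ = χ(a)` and `ε₂ = χ(x)` with `ε₁² = ε₂² = 1`. -/
def dicChar1 (r : ℕ) (ε₁ ε₂ : ℂ) : QuaternionGroup r → ℂ
  | .a i => ε₁ ^ i.val
  | .xa i => ε₂ * ε₁ ^ i.val

/-- The character inner product on the dicyclic group `QuaternionGroup r` (of order `4r`). -/
noncomputable def pairQ (r : ℕ) [NeZero r] (f h : QuaternionGroup r → ℂ) : ℂ :=
  (Fintype.card (QuaternionGroup r) : ℂ)⁻¹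
    * ∑ g : QuaternionGroup r, f g * (starRingEnd ℂ) (h g)

/-- Scalar version of the Clebsch–Gordan recursion (Chebyshev-like sequence). -/
noncomputable def cheb (x : ℂ) : ℕ → ℂ
  | 0 => 1
  | 1 => x
  | (k + 2) => x * cheb x (k + 1) - cheb x k

lemma chiERec_eq_cheb {G : Type*} (tr : G → ℂ) :
    ∀ (k : ℕ) (g : G), chiERec tr k g = cheb (tr g) k
  | 0, _ => rfl
  | 1, _ => rfl
  | (k + 2), g => by
      rw [chiERec, cheb, chiERec_eq_cheb tr (k + 1) g, chiERec_eq_cheb tr k g]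

lemma cheb_mul (z : ℂ) (hz : z ≠ 0) :
    ∀ k : ℕ, (z - z⁻¹) * cheb (z + z⁻¹) k = z ^ (k + 1) - (z⁻¹) ^ (k + 1)
  | 0 => by simp [cheb]
  | 1 => by
      rw [cheb]
      ring
  | (k + 2) => by
      have h1 := cheb_mul z hz (k + 1)
      have h0 := cheb_mul z hz k
      have hzw : z * z⁻¹ = 1 := mul_inv_cancel₀ hz
      rw [cheb]
      linear_combination (z + z⁻¹) * h1 - h0 + (z ^ (k + 1) - z⁻¹ ^ (k + 1)) * hzw

lemma sum_cheb_root (z : ℂ) (hz : z ≠ 0) (n : ℕ) (hzn : z ^ n = 1) (hz2 : z ^ 2 ≠ 1) :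
    ∑ k ∈ range n, cheb (z + z⁻¹) k = 0 := by
  have h1 : z ≠ 1 := by rintro rfl; exact hz2 (one_pow 2)
  have hinv1 : z⁻¹ ≠ 1 := by
    intro h
    exact h1 (by rw [← inv_inv z, h, inv_one])
  have hne : z - z⁻¹ ≠ 0 := by
    intro h
    have hzz : z = z⁻¹ := sub_eq_zero.mp h
    exact hz2 (by rw [sq]; nth_rewrite 2 [hzz]; exact mul_inv_cancel₀ hz)
  have hinvn : (z⁻¹) ^ n = 1 := by rw [inv_pow, hzn, inv_one]
  have key : (z - z⁻¹) * ∑ k ∈ range n, cheb (z + z⁻¹) k = 0 := by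
    rw [Finset.mul_sum]
    have hcong : ∀ k ∈ range n, (z - z⁻¹) * cheb (z + z⁻¹) k
        = z * z ^ k - z⁻¹ * (z⁻¹) ^ k := by
      intro k _
      rw [cheb_mul z hz k, pow_succ', pow_succ']
    rw [Finset.sum_congr rfl hcong, Finset.sum_sub_distrib, ← Finset.mul_sum,
      ← Finset.mul_sum, geom_sum_eq h1, geom_sum_eq hinv1, hzn, hinvn]
    simp
  exact (mul_eq_zero.mp key).resolve_left hne

lemma cheb_two : ∀ k : ℕ, cheb 2 k = (k : ℂ) + 1
  | 0 => by simp [cheb]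
  | 1 => by norm_num [cheb]
  | (k + 2) => by
      rw [cheb, cheb_two (k + 1), cheb_two k]
      push_cast; ring

lemma cheb_neg_two : ∀ k : ℕ, cheb (-2) k = (-1 : ℂ) ^ k * ((k : ℂ) + 1)
  | 0 => by simp [cheb]
  | 1 => by norm_num [cheb]
  | (k + 2) => by
      rw [cheb, cheb_neg_two (k + 1), cheb_neg_two k]
      push_cast; ring

lemma cheb_zero_even : ∀ k : ℕ, cheb 0 (2 * k) = (-1 : ℂ) ^ k
  | 0 => by simp [cheb]
  | (k + 1) => by
      have h : 2 * (k + 1) = 2 * k + 2 := by ring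
      rw [h, cheb, cheb_zero_even k]
      ring

lemma cheb_zero_odd : ∀ k : ℕ, cheb 0 (2 * k + 1) = 0
  | 0 => by simp [cheb]
  | (k + 1) => by
      have h : 2 * (k + 1) + 1 = 2 * k + 1 + 2 := by ring
      rw [h, cheb, cheb_zero_odd k]
      ring

lemma sum_cheb_zero : ∀ n : ℕ, ∑ k ∈ range (4 * n), cheb 0 k = 0
  | 0 => by simp
  | (n + 1) => by
      have h4 : 4 * (n + 1) = 4 * n + 1 + 1 + 1 + 1 := by ring
      have e0 : cheb 0 (4 * n) = 1 := by
        rw [show 4 * n = 2 * (2 * n) by ring, cheb_zero_even, pow_mul]; norm_num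
      have e1 : cheb 0 (4 * n + 1) = 0 := by
        rw [show 4 * n + 1 = 2 * (2 * n) + 1 by ring, cheb_zero_odd]
      have e2 : cheb 0 (4 * n + 1 + 1) = -1 := by
        rw [show 4 * n + 1 + 1 = 2 * (2 * n + 1) by ring, cheb_zero_even, pow_succ, pow_mul]
        norm_num
      have e3 : cheb 0 (4 * n + 1 + 1 + 1) = 0 := by
        rw [show 4 * n + 1 + 1 + 1 = 2 * (2 * n + 1) + 1 by ring, cheb_zero_odd]
      rw [h4, sum_range_succ, sum_range_succ, sum_range_succ, sum_range_succ,
        sum_cheb_zero n, e0, e1, e2, e3]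
      ring

lemma sum_neg_pow : ∀ n : ℕ, ∑ k ∈ range (2 * n), (-1 : ℂ) ^ k * ((k : ℂ) + 1) = -(n : ℂ)
  | 0 => by simp
  | (n + 1) => by
      have h2 : 2 * (n + 1) = 2 * n + 1 + 1 := by ring
      have hb : (-1 : ℂ) ^ (2 * n) = 1 := by rw [pow_mul]; norm_num
      have hb1 : (-1 : ℂ) ^ (2 * n + 1) = -1 := by rw [pow_succ, hb]; norm_num
      rw [h2, sum_range_succ, sum_range_succ, sum_neg_pow n, hb, hb1]
      push_cast; ring

lemma gauss_sum : ∀ n : ℕ, ∑ k ∈ range n, ((k : ℂ) + 1) = (n : ℂ) * ((n : ℂ) + 1) / 2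
  | 0 => by simp
  | (n + 1) => by
      rw [sum_range_succ, gauss_sum n]
      push_cast; ring

/-- Explicit bijection used to sum over the quaternion group. -/
def quatEquiv (n : ℕ) : ZMod (2 * n) ⊕ ZMod (2 * n) ≃ QuaternionGroup n where
  toFun s := match s with
    | .inl j => .a j
    | .inr j => .xa j
  invFun g := match g with
    | .a j => .inl j
    | .xa j => .inr j
  left_inv s := by cases s <;> rfl
  right_inv g := by cases g <;> rfl

lemma sum_quat {n : ℕ} [NeZero n] (f : QuaternionGroup n → ℂ) :
    ∑ g : QuaternionGroup n, f g
      = (∑ i : ZMod (2 * n), f (.a i)) + ∑ i : ZMod (2 * n), f (.xa i) := by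
  rw [← (quatEquiv n).sum_comp f, Fintype.sum_sum_type]
  rfl

/-- Let `Γ` be the dicyclic group of order `4r` with `r` even, so that
its exponent is `c_Γ = 2r`.  With `β_m^α = ⟨χ_{E_{m-1}}, χ_α⟩_Γ`, the sum
`Σ_{m=1}^{2r} β_m^α` equals `r/2` for each of the four 1-dimensional representations,
`r` for `α = ψ_t` with `t` even, and `r+1` for `α = ψ_t` with `t` odd
(`1 ≤ t ≤ r−1` indexing the 2-dimensional irreducibles `ψ_t`). -/
theorem dicyclic_even_beta_sums
    (r : ℕ) [NeZero r] (hr : Even r) :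
    (∀ ε₁ ε₂ : ℂ, ε₁ ^ 2 = 1 → ε₂ ^ 2 = 1 →
      ∑ m ∈ Finset.Icc 1 (2 * r),
          pairQ r (chiERec (psiT r 1) (m - 1)) (dicChar1 r ε₁ ε₂) = (r : ℂ) / 2)
    ∧ ∀ t ∈ Finset.Icc 1 (r - 1),
      ∑ m ∈ Finset.Icc 1 (2 * r),
          pairQ r (chiERec (psiT r 1) (m - 1)) (psiT r t)
        = if Even t then (r : ℂ) else (r : ℂ) + 1 := by
  have hr0 : r ≠ 0 := NeZero.ne r
  have hrc : (r : ℂ) ≠ 0 := Nat.cast_ne_zero.mpr hr0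
  have h2r0 : (2 * r : ℕ) ≠ 0 := by omega
  haveI : NeZero (2 * r) := ⟨h2r0⟩
  have hval : (r : ZMod (2 * r)).val = r := ZMod.val_natCast_of_lt (by omega)
  -- Step A: reduce each sum to a pairing with the summed character
  have stepA : ∀ h : QuaternionGroup r → ℂ,
      ∑ m ∈ Finset.Icc 1 (2 * r), pairQ r (chiERec (psiT r 1) (m - 1)) h
        = ((4 * r : ℕ) : ℂ)⁻¹ * ∑ g : QuaternionGroup r,
            (∑ k ∈ range (2 * r), cheb (psiT r 1 g) k) * (starRingEnd ℂ) (h g) := by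
    intro h
    simp only [pairQ, QuaternionGroup.card]
    rw [← Finset.mul_sum]
    congr 1
    rw [Finset.sum_comm]
    refine Finset.sum_congr rfl fun g _ => ?_
    rw [Finset.sum_mul]
    refine Finset.sum_nbij' (fun m => m - 1) (fun k => k + 1) ?_ ?_ ?_ ?_ ?_
    · intro m hm; simp only [mem_Icc] at hm; simp only [mem_range]; omega
    · intro k hk; simp only [mem_range] at hk; simp only [mem_Icc]; omega
    · intro m hm; simp only [mem_Icc] at hm; show m - 1 + 1 = m; omega
    · intro k _; show k + 1 - 1 = k; omega
    · intro m _; rw [chiERec_eq_cheb]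
  -- the value of the summed character on `a i`
  have key : ∀ i : ZMod (2 * r),
      ∑ k ∈ range (2 * r), cheb (psiT r 1 (QuaternionGroup.a i)) k
        = if i = 0 then (r : ℂ) * (2 * (r : ℂ) + 1)
          else if i = (r : ZMod (2 * r)) then -(r : ℂ) else 0 := by
    intro i
    have hvlt : i.val < 2 * r := i.val_lt
    set θ : ℂ := Real.pi * Complex.I * ((1 : ℕ) : ℂ) * (i.val : ℂ) / r with hθ
    have hpsi : psiT r 1 (QuaternionGroup.a i)
        = Complex.exp θ + (Complex.exp θ)⁻¹ := by
      rw [psiT, ← Complex.exp_neg, hθ]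
    by_cases h0 : i = 0
    · have hv0 : i.val = 0 := by rw [h0]; simp
      have hθ0 : θ = 0 := by rw [hθ, hv0]; simp
      have hps2 : psiT r 1 (QuaternionGroup.a i) = 2 := by
        rw [hpsi, hθ0, Complex.exp_zero]; norm_num
      rw [hps2, if_pos h0,
        Finset.sum_congr rfl (fun k (_ : k ∈ range (2 * r)) => cheb_two k), gauss_sum]
      push_cast
      ring
    · rw [if_neg h0]
      by_cases hR : i = (r : ZMod (2 * r))
      · have hvr : i.val = r := by rw [hR, hval]
        have hθpi : θ = Real.pi * Complex.I := by
          rw [hθ, hvr]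
          push_cast
          field_simp
        have hexp : Complex.exp θ = -1 := by rw [hθpi, Complex.exp_pi_mul_I]
        have hps2 : psiT r 1 (QuaternionGroup.a i) = -2 := by
          rw [hpsi, hexp]; norm_num
        rw [hps2, if_pos hR,
          Finset.sum_congr rfl (fun k (_ : k ∈ range (2 * r)) => cheb_neg_two k),
          sum_neg_pow r]
      · rw [if_neg hR]
        set z : ℂ := Complex.exp θ with hz
        have hzne : z ≠ 0 := Complex.exp_ne_zero θ
        have hvne0 : i.val ≠ 0 := by
          intro hv0
          apply h0
          have : i.val = (0 : ZMod (2 * r)).val := by rw [hv0]; simp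
          exact ZMod.val_injective _ this
        have hvner : i.val ≠ r := by
          intro hvr
          apply hR
          have : i.val = (r : ZMod (2 * r)).val := by rw [hvr, hval]
          exact ZMod.val_injective _ this
        have hzn : z ^ (2 * r) = 1 := by
          rw [hz, ← Complex.exp_nat_mul]
          have harg : ((2 * r : ℕ) : ℂ) * θ
              = ((i.val : ℤ) : ℂ) * (2 * Real.pi * Complex.I) := by
            rw [hθ]
            push_cast
            field_simp
          rw [harg, Complex.exp_eq_one_iff]
          exact ⟨i.val, rfl⟩
        have hz2 : z ^ 2 ≠ 1 := by
          intro h2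
          rw [hz, ← Complex.exp_nat_mul, Complex.exp_eq_one_iff] at h2
          obtain ⟨m, hm⟩ := h2
          rw [hθ] at hm
          have hne2 : (2 : ℂ) * Real.pi * Complex.I ≠ 0 := by
            simp [Real.pi_ne_zero, Complex.I_ne_zero, Complex.ofReal_ne_zero]
          have key2 : (2 * (Real.pi : ℂ) * Complex.I) * (i.val : ℂ)
              = (2 * (Real.pi : ℂ) * Complex.I) * ((m : ℂ) * (r : ℂ)) := by
            have hic : ((i.val : ℕ) : ℂ) = ZMod.cast i := ZMod.natCast_val i
            push_cast at hm
            field_simp at hm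
            linear_combination (2 * (Real.pi : ℂ) * Complex.I) * hm
          have hvm : (i.val : ℂ) = (m : ℂ) * (r : ℂ) := mul_left_cancel₀ hne2 key2
          have hvmz : (i.val : ℤ) = m * (r : ℤ) := by exact_mod_cast hvm
          have hrz : (0 : ℤ) < (r : ℤ) := by exact_mod_cast hr0.bot_lt
          have hm0 : 0 ≤ m := by nlinarith [Int.natCast_nonneg i.val]
          have hm2 : m < 2 := by
            by_contra hmn
            push_neg at hmn
            have h1 : (2 * r : ℤ) ≤ m * (r : ℤ) := by nlinarith
            have h2 : (i.val : ℤ) < 2 * r := by exact_mod_cast hvlt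
            omega
          interval_cases m
          · rw [zero_mul] at hvmz
            exact hvne0 (by exact_mod_cast hvmz)
          · rw [one_mul] at hvmz
            exact hvner (by exact_mod_cast hvmz)
        rw [hpsi]
        exact sum_cheb_root z hzne (2 * r) hzn hz2
  -- the value of the summed character on `xa i`
  have keyx : ∀ i : ZMod (2 * r),
      ∑ k ∈ range (2 * r), cheb (psiT r 1 (QuaternionGroup.xa i)) k = 0 := by
    intro i
    have hp : psiT r 1 (QuaternionGroup.xa i) = 0 := rfl
    rw [hp]
    obtain ⟨s, hs⟩ := hr
    rw [show 2 * r = 4 * s by omega]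
    exact sum_cheb_zero s
  have hrne : (0 : ZMod (2 * r)) ≠ (r : ZMod (2 * r)) := by
    intro h
    have : (0 : ZMod (2 * r)).val = (r : ZMod (2 * r)).val := by rw [h]
    rw [hval, ZMod.val_zero] at this
    omega
  -- two-point evaluation of the whole sum, for any character h
  have stepB : ∀ h : QuaternionGroup r → ℂ,
      ∑ m ∈ Finset.Icc 1 (2 * r), pairQ r (chiERec (psiT r 1) (m - 1)) h
        = ((4 * r : ℕ) : ℂ)⁻¹ *
            ((r : ℂ) * (2 * (r : ℂ) + 1) * (starRingEnd ℂ) (h (QuaternionGroup.a 0))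
              - (r : ℂ) * (starRingEnd ℂ) (h (QuaternionGroup.a (r : ZMod (2 * r))))) := by
    intro h
    rw [stepA h, sum_quat]
    have hx : ∑ i : ZMod (2 * r),
        (∑ k ∈ range (2 * r), cheb (psiT r 1 (QuaternionGroup.xa i)) k)
          * (starRingEnd ℂ) (h (QuaternionGroup.xa i)) = 0 := by
      refine Finset.sum_eq_zero fun i _ => ?_
      rw [keyx i, zero_mul]
    have ha : ∑ i : ZMod (2 * r),
        (∑ k ∈ range (2 * r), cheb (psiT r 1 (QuaternionGroup.a i)) k)
          * (starRingEnd ℂ) (h (QuaternionGroup.a i))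
        = ∑ i ∈ ({0, (r : ZMod (2 * r))} : Finset (ZMod (2 * r))),
            (∑ k ∈ range (2 * r), cheb (psiT r 1 (QuaternionGroup.a i)) k)
              * (starRingEnd ℂ) (h (QuaternionGroup.a i)) := by
      symm
      refine Finset.sum_subset (Finset.subset_univ _) fun i _ hi => ?_
      simp only [Finset.mem_insert, Finset.mem_singleton, not_or] at hi
      rw [key i, if_neg hi.1, if_neg hi.2, zero_mul]
    rw [hx, add_zero, ha, Finset.sum_pair hrne, key 0, key (r : ZMod (2 * r)),
      if_pos rfl, if_neg hrne.symm, if_pos rfl]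
    ring
  have hcard : ((4 * r : ℕ) : ℂ) ≠ 0 := Nat.cast_ne_zero.mpr (by omega)
  constructor
  · intro ε₁ ε₂ hε₁ hε₂
    rw [stepB]
    have h00 : dicChar1 r ε₁ ε₂ (QuaternionGroup.a 0) = 1 := by
      rw [dicChar1]
      simp
    have hεr : ε₁ ^ r = 1 := by
      obtain ⟨s, hs⟩ := hr
      rw [show r = 2 * s by omega, pow_mul, hε₁, one_pow]
    have h0r : dicChar1 r ε₁ ε₂ (QuaternionGroup.a (r : ZMod (2 * r))) = 1 := by
      rw [dicChar1, hval, hεr]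
    rw [h00, h0r, map_one]
    push_cast
    field_simp
    ring
  · intro t _
    rw [stepB]
    have h00 : psiT r t (QuaternionGroup.a 0) = 2 := by
      rw [psiT]
      simp
      norm_num
    have h0r : psiT r t (QuaternionGroup.a (r : ZMod (2 * r))) = 2 * (-1 : ℂ) ^ t := by
      rw [psiT, hval]
      have harg : (Real.pi : ℂ) * Complex.I * (t : ℂ) * (r : ℂ) / (r : ℂ)
          = (t : ℕ) * ((Real.pi : ℂ) * Complex.I) := by
        field_simp
      rw [harg, Complex.exp_neg, Complex.exp_nat_mul, Complex.exp_pi_mul_I]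
      rcases Nat.even_or_odd t with ht | ht
      · rw [ht.neg_one_pow]; norm_num
      · rw [ht.neg_one_pow]; norm_num
    rw [h00, h0r]
    have c2 : (starRingEnd ℂ) 2 = 2 := by
      rw [show (2:ℂ) = 1 + 1 by norm_num, map_add, map_one]
    have cpm : (starRingEnd ℂ) (2 * (-1 : ℂ) ^ t) = 2 * (-1 : ℂ) ^ t := by
      rw [map_mul, map_pow, show (2:ℂ) = 1 + 1 by norm_num, map_add, map_one, map_neg, map_one]
    rw [c2, cpm]
    rcases Nat.even_or_odd t with ht | ht
    · rw [if_pos ht, ht.neg_one_pow]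
      push_cast
      field_simp
      ring
    · rw [if_neg (Nat.not_even_iff_odd.mpr ht), ht.neg_one_pow]
      push_cast
      field_simp
      ring
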